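/- arXiv:1603.00234 — 3 statements merged into one kernel-verified Lean document; each statement's English description precedes it below -/
import Mathlib

section
/- The map θ : Sym^3(S^1) → S^1 sending an unordered triple {λ1, λ2, λ3} to the product λ1 λ2 λ3 is a locally trivial fiber bundle. -/
open CategoryTheory

/-- The singular chain complex of a topological space with coefficients in `R`. -/
noncomputable def singularChainComplex (R : Type) [CommRing R] :
    TopCat ⥤ ChainComplex (ModuleCat R) ℕ :=
  TopCat.toSSet ⋙ ((SimplicialObject.whiskering _ _).obj (ModuleCat.free R)) ⋙
    AlgebraicTopology.alternatingFaceMapComplex _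

/-- Singular homology with coefficients in `R`, as a functor `TopCat ⥤ ModuleCat R`. -/
noncomputable def singularHomology (R : Type) [CommRing R] (n : ℕ) :
    TopCat ⥤ ModuleCat R :=
  singularChainComplex R ⋙ HomologicalComplex.homologyFunctor _ _ n

/-- The `n`-th Betti number of a topological space with coefficients in `R`. -/
noncomputable def bettiNumber (R : Type) [CommRing R] (n : ℕ) (X : Type)
    [TopologicalSpace X] : ℕ :=
  Module.finrank R ((singularHomology R n).obj (TopCat.of X))

/-- The setoid on `Fin n → X` identifying tuples up to permutation. -/
def symmSetoid (X : Type) (n : ℕ) : Setoid (Fin n → X) where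
  r x y := ∃ e : Equiv.Perm (Fin n), x ∘ e = y
  iseqv := by
    refine ⟨fun x => ⟨Equiv.refl _, rfl⟩, ?_, ?_⟩
    · rintro x y ⟨e, rfl⟩
      exact ⟨e.symm, by ext i; simp⟩
    · rintro x y z ⟨e, rfl⟩ ⟨f, rfl⟩
      exact ⟨f.trans e, by ext i; simp⟩

/-- The `n`-th symmetric product of a topological space, with the quotient topology. -/
def SymProd (X : Type) [TopologicalSpace X] (n : ℕ) : Type :=
  Quotient (symmSetoid X n)

instance (X : Type) [TopologicalSpace X] (n : ℕ) : TopologicalSpace (SymProd X n) :=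
  instTopologicalSpaceQuotient

/-- The product map `θ : Sym³(S¹) → S¹`, `{λ₁, λ₂, λ₃} ↦ λ₁λ₂λ₃`. -/
noncomputable def theta : SymProd Circle 3 → Circle :=
  Quotient.lift (fun f : Fin 3 → Circle => ∏ i, f i)
    (by rintro x y ⟨e, rfl⟩; exact (Equiv.prod_comp e x).symm)

open Topology
namespace ThetaAux

noncomputable def act (c : Circle) : SymProd Circle 3 → SymProd Circle 3 :=
  Quotient.map (fun f i => f i * c) (by rintro x y ⟨e, rfl⟩; exact ⟨e, rfl⟩)

lemma theta_act (c : Circle) (q : SymProd Circle 3) : theta (act c q) = theta q * c ^ 3 := by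
  induction q using Quotient.ind with
  | _ f =>
    show (∏ i, f i * c) = (∏ i, f i) * c ^ 3
    rw [Finset.prod_mul_distrib, Finset.prod_const]
    simp

lemma act_act (c d : Circle) (q : SymProd Circle 3) : act c (act d q) = act (d * c) q := by
  induction q using Quotient.ind with
  | _ f => show Quotient.mk _ _ = Quotient.mk _ _; congr 1; funext i; exact mul_assoc _ _ _

lemma act_one (q : SymProd Circle 3) : act 1 q = q := by
  induction q using Quotient.ind with
  | _ f => show Quotient.mk _ _ = Quotient.mk _ _; congr 1; funext i; exact mul_one _

lemma act_inv_act (c : Circle) (q : SymProd Circle 3) : act c⁻¹ (act c q) = q := by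
  rw [act_act, mul_inv_cancel, act_one]

lemma isOpenMap_mk : IsOpenMap (Quotient.mk (symmSetoid Circle 3)) := by
  intro s hs
  have key : Quotient.mk (symmSetoid Circle 3) ⁻¹' (Quotient.mk (symmSetoid Circle 3) '' s)
      = ⋃ e : Equiv.Perm (Fin 3), (fun f : Fin 3 → Circle => f ∘ e) ⁻¹' s := by
    ext y
    simp only [Set.mem_preimage, Set.mem_image, Set.mem_iUnion]
    constructor
    · rintro ⟨x, hx, hxy⟩
      obtain ⟨e, he⟩ := Quotient.exact hxy
      exact ⟨e.symm, by rw [show y ∘ ⇑e.symm = x by rw [← he]; ext i; simp]; exact hx⟩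
    · rintro ⟨e, he⟩
      exact ⟨y ∘ e, he, Quotient.sound ⟨e.symm, by ext i; simp⟩⟩
  have h2 : IsOpen (Quotient.mk (symmSetoid Circle 3) ⁻¹'
      (Quotient.mk (symmSetoid Circle 3) '' s)) := by
    rw [key]
    exact isOpen_iUnion fun e => hs.preimage (continuous_pi fun i => continuous_apply (e i))
  exact isOpen_coinduced.mpr h2

lemma continuous_act : Continuous (fun p : Circle × SymProd Circle 3 => act p.1 p.2) := by
  have hq : IsQuotientMap (Prod.map (id : Circle → Circle)
      (Quotient.mk (symmSetoid Circle 3))) :=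
    (IsOpenMap.id.prodMap isOpenMap_mk).isQuotientMap
      (continuous_id.prodMap continuous_quotient_mk')
      (Function.surjective_id.prodMap Quotient.mk''_surjective)
  refine hq.continuous_iff.mpr ?_
  show Continuous fun p : Circle × (Fin 3 → Circle) =>
    Quotient.mk (symmSetoid Circle 3) (fun i => p.2 i * p.1)
  exact continuous_quotient_mk'.comp
    (continuous_pi fun i => ((continuous_apply i).comp continuous_snd).mul continuous_fst)

noncomputable def cube (μ lam : Circle) : Circle :=
  Circle.exp (Complex.arg ((lam * μ⁻¹ : Circle) : ℂ) / 3)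

lemma cube_pow (μ lam : Circle) : cube μ lam ^ 3 = lam * μ⁻¹ := by
  have h := Circle.exp_arg (lam * μ⁻¹)
  rw [← h, cube]
  rw [pow_succ, pow_succ, pow_one, ← Circle.exp_add, ← Circle.exp_add]
  congr 1
  ring

lemma continuousAt_cube (μ lam : Circle) (h : ((lam * μ⁻¹ : Circle) : ℂ) ≠ -1) :
    ContinuousAt (cube μ) lam := by
  have habs : ‖((lam * μ⁻¹ : Circle) : ℂ)‖ = 1 := Circle.norm_coe _
  have hs : ((lam * μ⁻¹ : Circle) : ℂ) ∈ Complex.slitPlane := by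
    rw [Complex.mem_slitPlane_iff]
    by_contra hc
    push_neg at hc
    obtain ⟨h1, h2⟩ := hc
    have hsq : ((lam * μ⁻¹ : Circle) : ℂ).re ^ 2 = 1 := by
      have := Complex.sq_norm ((lam * μ⁻¹ : Circle) : ℂ)
      rw [habs, Complex.normSq_apply] at this
      nlinarith [this]
    have : ((lam * μ⁻¹ : Circle) : ℂ).re = -1 := by nlinarith
    exact h (Complex.ext this (by simpa using h2))
  have harg : ContinuousAt Complex.arg ((lam * μ⁻¹ : Circle) : ℂ) :=
    Complex.continuousAt_arg hs
  have h1 : ContinuousAt (fun l : Circle => ((l * μ⁻¹ : Circle) : ℂ)) lam :=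
    (continuous_subtype_val.comp (continuous_mul_right μ⁻¹)).continuousAt
  have h2 : ContinuousAt (fun l : Circle => Complex.arg ((l * μ⁻¹ : Circle) : ℂ) / 3) lam :=
    (ContinuousAt.comp (x := lam) (f := fun l : Circle => ((l * μ⁻¹ : Circle) : ℂ)) harg h1).div_const 3
  exact Circle.exp.continuous.continuousAt.comp h2

end ThetaAux

/-- `θ : Sym³(S¹) → S¹` is a locally trivial fiber bundle: it is continuous, and every
point `μ ∈ S¹` has an open neighborhood `U` over which `θ` is trivial with fiber
`θ⁻¹(μ)`. -/
theorem theta_isFiberBundle :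
    Continuous theta ∧
      ∀ μ : Circle, ∃ U : Set Circle, IsOpen U ∧ μ ∈ U ∧
        ∃ h : {x : SymProd Circle 3 // theta x ∈ U} ≃ₜ U × {x : SymProd Circle 3 // theta x = μ},
          ∀ x, ((h x).1 : Circle) = theta x.1 := by
  have contθ : Continuous theta :=
    Continuous.quotient_lift (continuous_finset_prod _ fun i _ => continuous_apply i) _
  refine ⟨contθ, fun μ => ?_⟩
  set U : Set Circle := {l : Circle | ((l * μ⁻¹ : Circle) : ℂ) ≠ -1} with hU
  have hUopen : IsOpen U :=
    isOpen_compl_singleton.preimage (continuous_subtype_val.comp (continuous_mul_right μ⁻¹))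
  have hμU : μ ∈ U := by
    simp only [hU, Set.mem_setOf_eq, mul_inv_cancel]
    intro h
    rw [show ((1 : Circle) : ℂ) = 1 from rfl] at h
    norm_num at h
  refine ⟨U, hUopen, hμU, ?_⟩
  have key : ∀ (l : Circle) (y : SymProd Circle 3), theta y = μ →
      theta (ThetaAux.act (ThetaAux.cube μ l) y) = l := by
    intro l y hy
    rw [ThetaAux.theta_act, ThetaAux.cube_pow, hy, mul_comm, mul_assoc, inv_mul_cancel, mul_one]
  have keyF : ∀ x : SymProd Circle 3,
      theta (ThetaAux.act (ThetaAux.cube μ (theta x))⁻¹ x) = μ := by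
    intro x
    rw [ThetaAux.theta_act, inv_pow, ThetaAux.cube_pow, mul_inv, ← mul_assoc, mul_inv_cancel,
      one_mul, inv_inv]
  refine ⟨Homeomorph.mk
    { toFun := fun x => (⟨theta x.1, x.2⟩,
        ⟨ThetaAux.act (ThetaAux.cube μ (theta x.1))⁻¹ x.1, keyF x.1⟩)
      invFun := fun p => ⟨ThetaAux.act (ThetaAux.cube μ p.1.1) p.2.1, by
        rw [key p.1.1 p.2.1 p.2.2]; exact p.1.2⟩
      left_inv := fun x => by
        apply Subtype.ext
        show ThetaAux.act (ThetaAux.cube μ (theta x.1)) _ = x.1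
        rw [ThetaAux.act_act, inv_mul_cancel, ThetaAux.act_one]
      right_inv := fun p => by
        have h1 : theta (ThetaAux.act (ThetaAux.cube μ p.1.1) p.2.1) = p.1.1 :=
          key p.1.1 p.2.1 p.2.2
        refine Prod.ext (Subtype.ext h1) (Subtype.ext ?_)
        show ThetaAux.act (ThetaAux.cube μ (theta (ThetaAux.act (ThetaAux.cube μ p.1.1) p.2.1)))⁻¹
          (ThetaAux.act (ThetaAux.cube μ p.1.1) p.2.1) = p.2.1
        rw [h1, ThetaAux.act_act, mul_inv_cancel, ThetaAux.act_one] }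
    ?_ ?_, fun x => rfl⟩
  · -- continuity of toFun
    have contθv : Continuous fun x : {x : SymProd Circle 3 // theta x ∈ U} => theta x.1 :=
      contθ.comp continuous_subtype_val
    have contc : Continuous fun x : {x : SymProd Circle 3 // theta x ∈ U} =>
        ThetaAux.cube μ (theta x.1) :=
      continuous_iff_continuousAt.mpr fun x =>
        ContinuousAt.comp (g := ThetaAux.cube μ) (x := x) (ThetaAux.continuousAt_cube μ (theta x.1) x.2)
          contθv.continuousAt
    exact (contθv.subtype_mk _).prodMk
      ((ThetaAux.continuous_act.comp (contc.inv.prodMk continuous_subtype_val)).subtype_mk _)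
  · -- continuity of invFun
    have contc : Continuous fun p : U × {x : SymProd Circle 3 // theta x = μ} =>
        ThetaAux.cube μ p.1.1 :=
      continuous_iff_continuousAt.mpr fun p =>
        ContinuousAt.comp (g := ThetaAux.cube μ) (x := p) (ThetaAux.continuousAt_cube μ p.1.1 p.1.2)
          (continuous_subtype_val.comp continuous_fst).continuousAt
    exact (ThetaAux.continuous_act.comp
      (contc.prodMk (continuous_subtype_val.comp continuous_snd))).subtype_mk _
end

section
/- For each unordered triple {λ1, λ2, λ3} of points of S^1 with λ1λ2λ3 = 1, there is exactly one triple (s1, s2, s3) ∈ R^3 with s1 ≤ s2 ≤ s3 ≤ s1 + 1, s1 + s2 + s3 = 0, and {e^{2πi s1}, e^{2πi s2}, e^{2πi s3}} = {λ1, λ2, λ3} as multisets. -/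
open Real

private lemma ms12 {α : Type*} (a b c : α) : ({a, b, c} : Multiset α) = {b, a, c} := by
  simp only [Multiset.insert_eq_cons]
  exact Multiset.cons_swap a b {c}

private lemma ms23 {α : Type*} (a b c : α) : ({a, b, c} : Multiset α) = {a, c, b} := by
  simp only [Multiset.insert_eq_cons, ← Multiset.cons_zero]
  rw [Multiset.cons_swap b c]

private lemma ms_rot {α : Type*} (a b c : α) : ({a, b, c} : Multiset α) = {b, c, a} := by
  rw [ms12, ms23]

private lemma ms13 {α : Type*} (a b c : α) : ({a, b, c} : Multiset α) = {c, b, a} := by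
  rw [ms_rot, ms_rot, ms23]

private lemma pair_cases' {α : Type*} {a b c d : α} (h : ({a, b} : Multiset α) = {c, d}) :
    (a = c ∧ b = d) ∨ (a = d ∧ b = c) := by
  have ha : a ∈ ({c, d} : Multiset α) := h ▸ by simp
  simp only [Multiset.insert_eq_cons, Multiset.mem_cons, Multiset.mem_singleton] at ha
  simp only [Multiset.insert_eq_cons, ← Multiset.cons_zero] at h
  rcases ha with ha | ha
  · subst ha
    rw [Multiset.cons_inj_right] at h
    exact Or.inl ⟨rfl, by simpa using h⟩
  · subst ha
    rw [Multiset.cons_swap c a, Multiset.cons_inj_right] at h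
    exact Or.inr ⟨rfl, by simpa using h⟩

private lemma triple_cases' {α : Type*} {a b c d e f : α}
    (h : ({a, b, c} : Multiset α) = {d, e, f}) :
    (a = d ∧ ((b = e ∧ c = f) ∨ (b = f ∧ c = e))) ∨
    (a = e ∧ ((b = d ∧ c = f) ∨ (b = f ∧ c = d))) ∨
    (a = f ∧ ((b = d ∧ c = e) ∨ (b = e ∧ c = d))) := by
  have ha : a ∈ ({d, e, f} : Multiset α) := h ▸ by simp
  simp only [Multiset.insert_eq_cons, Multiset.mem_cons, Multiset.mem_singleton] at ha
  simp only [Multiset.insert_eq_cons, ← Multiset.cons_zero] at h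
  rcases ha with ha | ha | ha
  · subst ha
    rw [Multiset.cons_inj_right] at h
    refine Or.inl ⟨rfl, pair_cases' (show ({b, c} : Multiset α) = {e, f} from ?_)⟩
    simp only [Multiset.insert_eq_cons, ← Multiset.cons_zero]
    exact h
  · subst ha
    rw [Multiset.cons_swap d a, Multiset.cons_inj_right] at h
    refine Or.inr (Or.inl ⟨rfl, pair_cases' (show ({b, c} : Multiset α) = {d, f} from ?_)⟩)
    simp only [Multiset.insert_eq_cons, ← Multiset.cons_zero]
    exact h
  · subst ha
    rw [Multiset.cons_swap e a, Multiset.cons_swap d a, Multiset.cons_inj_right] at h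
    refine Or.inr (Or.inr ⟨rfl, pair_cases' (show ({b, c} : Multiset α) = {d, e} from ?_)⟩)
    simp only [Multiset.insert_eq_cons, ← Multiset.cons_zero]
    exact h

private lemma exp_two_pi_eq' {x y : ℝ}
    (h : Circle.exp (2 * π * x) = Circle.exp (2 * π * y)) : ∃ n : ℤ, x = y + n := by
  obtain ⟨m, hm⟩ := Circle.exp_eq_exp.mp h
  refine ⟨m, ?_⟩
  have h2 : (2 * π) * x = (2 * π) * (y + (m : ℝ)) := by ring_nf; ring_nf at hm; linarith
  exact mul_left_cancel₀ (by positivity : (0:ℝ) < 2 * π).ne' h2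

private lemma exp_two_pi_shift (a : ℝ) : Circle.exp (2 * π * (a + 1)) = Circle.exp (2 * π * a) :=
  Circle.exp_eq_exp.mpr ⟨1, by push_cast; ring⟩

private lemma exp_two_pi_shift' (a : ℝ) : Circle.exp (2 * π * (a - 1)) = Circle.exp (2 * π * a) :=
  Circle.exp_eq_exp.mpr ⟨-1, by push_cast; ring⟩

private lemma exists_part (a1 a2 a3 : ℝ) (k : ℤ)
    (hb1 : -(1/2 : ℝ) < a1) (h12 : a1 ≤ a2) (h23 : a2 ≤ a3) (hb3 : a3 ≤ 1/2)
    (hk : a1 + a2 + a3 = (k : ℝ)) :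
    ∃ s1 s2 s3 : ℝ, s1 ≤ s2 ∧ s2 ≤ s3 ∧ s3 ≤ s1 + 1 ∧ s1 + s2 + s3 = 0 ∧
      ({Circle.exp (2*π*s1), Circle.exp (2*π*s2), Circle.exp (2*π*s3)} : Multiset Circle)
        = {Circle.exp (2*π*a1), Circle.exp (2*π*a2), Circle.exp (2*π*a3)} := by
  have hkc : k = -1 ∨ k = 0 ∨ k = 1 := by
    have hlo : (-3 : ℤ) < 2 * k := by exact_mod_cast
      (show ((-3 : ℤ) : ℝ) < ((2 * k : ℤ) : ℝ) by push_cast; linarith)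
    have hhi : (2 * k : ℤ) ≤ 3 := by exact_mod_cast
      (show ((2 * k : ℤ) : ℝ) ≤ ((3 : ℤ) : ℝ) by push_cast; linarith)
    omega
  rcases hkc with rfl | rfl | rfl
  · refine ⟨a2, a3, a1 + 1, h23, by linarith, by linarith, by push_cast at hk; linarith, ?_⟩
    rw [exp_two_pi_shift, ← ms_rot]
  · exact ⟨a1, a2, a3, h12, h23, by linarith, by push_cast at hk; linarith, rfl⟩
  · refine ⟨a3 - 1, a1, a2, by linarith, h12, by linarith, by push_cast at hk; linarith, ?_⟩
    rw [exp_two_pi_shift', ms_rot]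

set_option maxHeartbeats 3200000 in
private lemma uniq_part {s1 s2 s3 t1 t2 t3 : ℝ}
    (o1 : s1 ≤ s2) (o2 : s2 ≤ s3) (o3 : s3 ≤ s1 + 1) (oe : s1 + s2 + s3 = 0)
    (p1 : t1 ≤ t2) (p2 : t2 ≤ t3) (p3 : t3 ≤ t1 + 1) (pe : t1 + t2 + t3 = 0)
    (hm : ({Circle.exp (2*π*s1), Circle.exp (2*π*s2), Circle.exp (2*π*s3)} : Multiset Circle)
        = {Circle.exp (2*π*t1), Circle.exp (2*π*t2), Circle.exp (2*π*t3)}) :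
    s1 = t1 ∧ s2 = t2 ∧ s3 = t3 := by
  rcases triple_cases' hm with ⟨h1, ⟨h2, h3⟩ | ⟨h2, h3⟩⟩ | ⟨h1, ⟨h2, h3⟩ | ⟨h2, h3⟩⟩ |
    ⟨h1, ⟨h2, h3⟩ | ⟨h2, h3⟩⟩ <;>
  (obtain ⟨n1, e1⟩ := exp_two_pi_eq' h1
   obtain ⟨n2, e2⟩ := exp_two_pi_eq' h2
   obtain ⟨n3, e3⟩ := exp_two_pi_eq' h3
   have c1 : n1 = -1 ∨ n1 = 0 ∨ n1 = 1 := by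
     have u1 : (-2 : ℤ) < n1 := by exact_mod_cast (show (-2:ℝ) < (n1:ℝ) by linarith)
     have u2 : n1 < (2 : ℤ) := by exact_mod_cast (show (n1:ℝ) < (2:ℝ) by linarith)
     omega
   have c2 : n2 = -1 ∨ n2 = 0 ∨ n2 = 1 := by
     have u1 : (-2 : ℤ) < n2 := by exact_mod_cast (show (-2:ℝ) < (n2:ℝ) by linarith)
     have u2 : n2 < (2 : ℤ) := by exact_mod_cast (show (n2:ℝ) < (2:ℝ) by linarith)
     omega
   have c3 : n3 = -1 ∨ n3 = 0 ∨ n3 = 1 := by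
     have u1 : (-2 : ℤ) < n3 := by exact_mod_cast (show (-2:ℝ) < (n3:ℝ) by linarith)
     have u2 : n3 < (2 : ℤ) := by exact_mod_cast (show (n3:ℝ) < (2:ℝ) by linarith)
     omega
   have csum : n1 + n2 + n3 = 0 := by
     exact_mod_cast (show ((n1 + n2 + n3 : ℤ) : ℝ) = 0 by push_cast; linarith)
   rcases c1 with rfl | rfl | rfl <;> rcases c2 with rfl | rfl | rfl <;>
     rcases c3 with rfl | rfl | rfl <;>
   first
     | exact absurd csum (by decide)
     | (push_cast at e1 e2 e3
        exact ⟨by linarith, by linarith, by linarith⟩))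

open Real in
/-- For every unordered triple `{λ₁, λ₂, λ₃}` of points of `S¹` with `λ₁λ₂λ₃ = 1` there
is exactly one triple `(s₁, s₂, s₃) ∈ ℝ³` with `s₁ ≤ s₂ ≤ s₃ ≤ s₁ + 1`,
`s₁ + s₂ + s₃ = 0` and `{e^{2πi s₁}, e^{2πi s₂}, e^{2πi s₃}} = {λ₁, λ₂, λ₃}`
as multisets. -/
theorem existsUnique_lift_triple (l1 l2 l3 : Circle) (h : l1 * l2 * l3 = 1) :
    ∃! s : ℝ × ℝ × ℝ,
      s.1 ≤ s.2.1 ∧ s.2.1 ≤ s.2.2 ∧ s.2.2 ≤ s.1 + 1 ∧ s.1 + s.2.1 + s.2.2 = 0 ∧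
        ({Circle.exp (2 * π * s.1), Circle.exp (2 * π * s.2.1), Circle.exp (2 * π * s.2.2)}
          : Multiset Circle) = {l1, l2, l3} := by
  apply existsUnique_of_exists_of_unique
  · -- existence
    have hπ : (0:ℝ) < 2 * π := by positivity
    set a1 := Complex.arg (l1 : ℂ) / (2 * π) with ha1
    set a2 := Complex.arg (l2 : ℂ) / (2 * π) with ha2
    set a3 := Complex.arg (l3 : ℂ) / (2 * π) with ha3
    have key1 : Circle.exp (2 * π * a1) = l1 := by
      rw [ha1, show 2 * π * (Complex.arg (l1 : ℂ) / (2 * π)) = Complex.arg (l1 : ℂ) by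
        field_simp]
      exact Circle.exp_arg l1
    have key2 : Circle.exp (2 * π * a2) = l2 := by
      rw [ha2, show 2 * π * (Complex.arg (l2 : ℂ) / (2 * π)) = Complex.arg (l2 : ℂ) by
        field_simp]
      exact Circle.exp_arg l2
    have key3 : Circle.exp (2 * π * a3) = l3 := by
      rw [ha3, show 2 * π * (Complex.arg (l3 : ℂ) / (2 * π)) = Complex.arg (l3 : ℂ) by
        field_simp]
      exact Circle.exp_arg l3
    have hb1l : -(1/2 : ℝ) < a1 := by
      rw [ha1, lt_div_iff₀ hπ]
      have := Complex.neg_pi_lt_arg (l1 : ℂ); linarith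
    have hb2l : -(1/2 : ℝ) < a2 := by
      rw [ha2, lt_div_iff₀ hπ]
      have := Complex.neg_pi_lt_arg (l2 : ℂ); linarith
    have hb3l : -(1/2 : ℝ) < a3 := by
      rw [ha3, lt_div_iff₀ hπ]
      have := Complex.neg_pi_lt_arg (l3 : ℂ); linarith
    have hb1r : a1 ≤ 1/2 := by
      rw [ha1, div_le_iff₀ hπ]
      have := Complex.arg_le_pi (l1 : ℂ); linarith
    have hb2r : a2 ≤ 1/2 := by
      rw [ha2, div_le_iff₀ hπ]
      have := Complex.arg_le_pi (l2 : ℂ); linarith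
    have hb3r : a3 ≤ 1/2 := by
      rw [ha3, div_le_iff₀ hπ]
      have := Complex.arg_le_pi (l3 : ℂ); linarith
    have hsum1 : Circle.exp (2 * π * (a1 + a2 + a3)) = Circle.exp (2 * π * 0) := by
      rw [show 2 * π * (a1 + a2 + a3) = 2*π*a1 + (2*π*a2 + 2*π*a3) by ring,
        Circle.exp_add, Circle.exp_add, ← mul_assoc, key1, key2, key3, h, mul_zero,
        Circle.exp_zero]
    obtain ⟨k, hk⟩ := exp_two_pi_eq' hsum1
    have hk' : a1 + a2 + a3 = (k : ℝ) := by linarith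
    clear hsum1 hk h ha1 ha2 ha3
    rcases le_total a1 a2 with h12 | h12 <;> rcases le_total a2 a3 with h23 | h23 <;>
      rcases le_total a1 a3 with h13 | h13
    · obtain ⟨s1, s2, s3, q1, q2, q3, q4, q5⟩ :=
        exists_part a1 a2 a3 k hb1l h12 h23 hb3r (by linarith)
      exact ⟨(s1, s2, s3), q1, q2, q3, q4, q5.trans (by rw [key1, key2, key3])⟩
    · obtain ⟨s1, s2, s3, q1, q2, q3, q4, q5⟩ :=
        exists_part a3 a1 a2 k hb3l h13 h12 hb2r (by linarith)
      exact ⟨(s1, s2, s3), q1, q2, q3, q4,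
        q5.trans (by rw [key1, key2, key3]; exact ms_rot l3 l1 l2)⟩
    · obtain ⟨s1, s2, s3, q1, q2, q3, q4, q5⟩ :=
        exists_part a1 a3 a2 k hb1l h13 h23 hb2r (by linarith)
      exact ⟨(s1, s2, s3), q1, q2, q3, q4,
        q5.trans (by rw [key1, key2, key3]; exact ms23 l1 l3 l2)⟩
    · obtain ⟨s1, s2, s3, q1, q2, q3, q4, q5⟩ :=
        exists_part a3 a1 a2 k hb3l h13 h12 hb2r (by linarith)
      exact ⟨(s1, s2, s3), q1, q2, q3, q4,
        q5.trans (by rw [key1, key2, key3]; exact ms_rot l3 l1 l2)⟩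
    · obtain ⟨s1, s2, s3, q1, q2, q3, q4, q5⟩ :=
        exists_part a2 a1 a3 k hb2l h12 h13 hb3r (by linarith)
      exact ⟨(s1, s2, s3), q1, q2, q3, q4,
        q5.trans (by rw [key1, key2, key3]; exact ms12 l2 l1 l3)⟩
    · obtain ⟨s1, s2, s3, q1, q2, q3, q4, q5⟩ :=
        exists_part a2 a3 a1 k hb2l h23 h13 hb1r (by linarith)
      exact ⟨(s1, s2, s3), q1, q2, q3, q4,
        q5.trans (by rw [key1, key2, key3]; exact (ms_rot l1 l2 l3).symm)⟩
    · obtain ⟨s1, s2, s3, q1, q2, q3, q4, q5⟩ :=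
        exists_part a3 a2 a1 k hb3l h23 h12 hb1r (by linarith)
      exact ⟨(s1, s2, s3), q1, q2, q3, q4,
        q5.trans (by rw [key1, key2, key3]; exact ms13 l3 l2 l1)⟩
    · obtain ⟨s1, s2, s3, q1, q2, q3, q4, q5⟩ :=
        exists_part a3 a2 a1 k hb3l h23 h12 hb1r (by linarith)
      exact ⟨(s1, s2, s3), q1, q2, q3, q4,
        q5.trans (by rw [key1, key2, key3]; exact ms13 l3 l2 l1)⟩
  · -- uniqueness
    rintro ⟨y1, y2, y3⟩ ⟨z1, z2, z3⟩ ⟨o1, o2, o3, oe, om⟩ ⟨p1, p2, p3, pe, pm⟩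
    obtain ⟨e1, e2, e3⟩ := uniq_part o1 o2 o3 oe p1 p2 p3 pe (om.trans pm.symm)
    simp only [Prod.mk.injEq]
    exact ⟨e1, e2, e3⟩
end

section
/- The subspace of Sym^3(S^1) consisting of unordered triples with a repeated entry, i.e. {{λ, λ, μ} : λ, μ ∈ S^1}, is homeomorphic to the torus S^1 × S^1, via {λ, λ, μ} ↦ (λ, μ) where λ is the repeated element. -/
open CategoryTheory

/-- The subspace of `Sym³(S¹)` of unordered triples with a repeated entry. -/
def repeatedTriples : Set (SymProd Circle 3) :=
  {q | ∃ l m : Circle, q = Quotient.mk (symmSetoid Circle 3) ![l, l, m]}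

section Aux

variable {X : Type} [TopologicalSpace X] {n : ℕ}

lemma continuous_precomp (e : Equiv.Perm (Fin n)) :
    Continuous (fun x : Fin n → X => x ∘ e) :=
  continuous_pi fun i => continuous_apply (e i)

lemma isOpenMap_symProd_mk : IsOpenMap (Quotient.mk (symmSetoid X n)) := by
  intro U hU
  rw [isOpen_coinduced]
  have : (Quotient.mk (symmSetoid X n)) ⁻¹' (Quotient.mk (symmSetoid X n) '' U) =
      ⋃ e : Equiv.Perm (Fin n), (fun x : Fin n → X => x ∘ e) ⁻¹' U := by
    ext x
    simp only [Set.mem_preimage, Set.mem_image, Set.mem_iUnion]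
    constructor
    · rintro ⟨u, hu, hq⟩
      obtain ⟨e, he⟩ := Quotient.exact hq
      refine ⟨e.symm, ?_⟩
      have hx : x ∘ ⇑e.symm = u := by rw [← he]; ext i; simp
      rwa [hx]
    · rintro ⟨e, he⟩
      exact ⟨x ∘ e, he, Quotient.sound ⟨e.symm, by ext i; simp⟩⟩
  show IsOpen ((Quotient.mk (symmSetoid X n)) ⁻¹' (Quotient.mk (symmSetoid X n) '' U))
  rw [this]
  exact isOpen_iUnion fun e => (continuous_precomp e).isOpen_preimage U hU

lemma isClosed_symRel [T2Space X] :
    IsClosed {p : (Fin n → X) × (Fin n → X) | (symmSetoid X n).r p.1 p.2} := by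
  have : {p : (Fin n → X) × (Fin n → X) | (symmSetoid X n).r p.1 p.2} =
      ⋃ e : Equiv.Perm (Fin n), {p : (Fin n → X) × (Fin n → X) | p.1 ∘ e = p.2} := by
    ext p; simp [symmSetoid, Set.mem_iUnion]; exact Iff.rfl
  rw [this]
  exact isClosed_iUnion_of_finite fun e =>
    isClosed_eq ((continuous_precomp e).comp continuous_fst) continuous_snd

instance symProd_t2 [T2Space X] : T2Space (SymProd X n) := by
  rw [t2_iff_isClosed_diagonal, ← isOpen_compl_iff]
  have key : (Set.diagonal (SymProd X n))ᶜ =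
      Prod.map (Quotient.mk (symmSetoid X n)) (Quotient.mk (symmSetoid X n)) ''
        {p : (Fin n → X) × (Fin n → X) | (symmSetoid X n).r p.1 p.2}ᶜ := by
    ext ⟨u, v⟩
    simp only [Set.mem_compl_iff, Set.mem_diagonal_iff, Set.mem_image, Prod.exists,
      Prod.map_apply, Prod.mk.injEq]
    constructor
    · intro huv
      obtain ⟨x, rfl⟩ := Quotient.exists_rep u
      obtain ⟨y, rfl⟩ := Quotient.exists_rep v
      exact ⟨(x, y), fun hr => huv (Quotient.sound hr), rfl⟩
    · rintro ⟨⟨x, y⟩, hr, he⟩ h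
      simp only [Prod.map_apply, Prod.mk.injEq] at he
      obtain ⟨rfl, rfl⟩ := he
      exact hr (Quotient.exact h)
  rw [key]
  exact (isOpenMap_symProd_mk.prodMap isOpenMap_symProd_mk) _
    (isOpen_compl_iff.mpr isClosed_symRel)

lemma multiset_pair_eq {α : Type*} {a b c d : α}
    (h : ({a, a, b} : Multiset α) = {c, c, d}) : a = c ∧ b = d := by
  classical
  simp only [Multiset.insert_eq_cons] at h
  by_cases hac : a = c
  · subst hac
    rw [Multiset.cons_inj_right, Multiset.cons_inj_right, Multiset.singleton_inj] at h
    exact ⟨rfl, h⟩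
  · exfalso
    have hc := congrArg (Multiset.count a) h
    have hmem : a ∈ (c ::ₘ c ::ₘ {d} : Multiset α) := by rw [← h]; simp
    have had : a = d := by
      rcases Multiset.mem_cons.mp hmem with h' | h'
      · exact absurd h' hac
      · rcases Multiset.mem_cons.mp h' with h'' | h''
        · exact absurd h'' hac
        · simpa using h''
    subst had
    simp [Multiset.count_cons, hac, Multiset.count_singleton] at hc

end Aux

lemma mk_triple_inj {l m l' m' : Circle}
    (h : Quotient.mk (symmSetoid Circle 3) ![l, l, m] =
      Quotient.mk (symmSetoid Circle 3) ![l', l', m']) : l = l' ∧ m = m' := by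
  obtain ⟨e, he⟩ := Quotient.exact h
  have key : ∀ (a b : Circle),
      (Finset.univ.val.map ![a, a, b]) = ({a, a, b} : Multiset Circle) := by
    intro a b
    have huniv : (Finset.univ.val : Multiset (Fin 3)) = {0, 1, 2} := by decide
    rw [huniv]; simp
  have hmul : ({l, l, m} : Multiset Circle) = {l', l', m'} := by
    rw [← key l m, ← key l' m', ← he, ← Multiset.map_map, Multiset.map_univ_val_equiv]
  exact multiset_pair_eq hmul

/-- The subspace of `Sym³(S¹)` of unordered triples with a repeated entry is
homeomorphic to the torus `S¹ × S¹`, via `{λ, λ, μ} ↦ (λ, μ)` with `λ` the repeated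
element (stated via the inverse homeomorphism `(λ, μ) ↦ {λ, λ, μ}`). -/
theorem repeatedTriples_homeomorph_torus :
    ∃ h : Circle × Circle ≃ₜ repeatedTriples,
      ∀ l m : Circle,
        (h (l, m) : SymProd Circle 3) = Quotient.mk (symmSetoid Circle 3) ![l, l, m] := by
  have hbij : Function.Bijective (fun p : Circle × Circle =>
      (⟨Quotient.mk (symmSetoid Circle 3) ![p.1, p.1, p.2],
        p.1, p.2, rfl⟩ : repeatedTriples)) := by
    constructor
    · rintro ⟨l, m⟩ ⟨l', m'⟩ hpq
      obtain ⟨h1, h2⟩ := mk_triple_inj (congrArg Subtype.val hpq)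
      simp only [Prod.mk.injEq]
      exact ⟨h1, h2⟩
    · rintro ⟨q, l, m, rfl⟩
      exact ⟨(l, m), rfl⟩
  have hcont : Continuous (fun p : Circle × Circle =>
      (⟨Quotient.mk (symmSetoid Circle 3) ![p.1, p.1, p.2],
        p.1, p.2, rfl⟩ : repeatedTriples)) := by
    refine Continuous.subtype_mk ?_ _
    refine Continuous.comp continuous_quotient_mk' ?_
    refine continuous_pi fun i => ?_
    fin_cases i
    · simpa using continuous_fst
    · simpa using continuous_fst
    · simpa using continuous_snd
  exact ⟨hcont.homeoOfEquivCompactToT2 (f := Equiv.ofBijective _ hbij), fun l m => rfl⟩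
end
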